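/- arXiv:2502.15960 — 4 statements merged into one kernel-verified Lean document; each statement's English description precedes it below -/
import Mathlib

section
/- Let p > 3 be prime and let C be a finite set of nonzero Markoff triples mod p closed under the first-coordinate Vieta involution. Then the sum over x ∈ C of y1(x) equals |C|/2 in F_p, where y1(x) = x1/(3*x2*x3) if x1*x2*x3 ≠ 0, y1(x) = 0 if x1 = 0, and y1(x) = 1/2 otherwise. -/
def Markoff (p : ℕ) (x : ZMod p × ZMod p × ZMod p) : Prop :=
  x.1^2 + x.2.1^2 + x.2.2^2 = 3 * x.1 * x.2.1 * x.2.2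

def vieta1 (p : ℕ) (x : ZMod p × ZMod p × ZMod p) : ZMod p × ZMod p × ZMod p :=
  (3 * x.2.1 * x.2.2 - x.1, x.2.1, x.2.2)

def vieta2 (p : ℕ) (x : ZMod p × ZMod p × ZMod p) : ZMod p × ZMod p × ZMod p :=
  (x.1, 3 * x.1 * x.2.2 - x.2.1, x.2.2)

def vieta3 (p : ℕ) (x : ZMod p × ZMod p × ZMod p) : ZMod p × ZMod p × ZMod p :=
  (x.1, x.2.1, 3 * x.1 * x.2.1 - x.2.2)

def y1 (p : ℕ) [Fact p.Prime] (x : ZMod p × ZMod p × ZMod p) : ZMod p :=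
  if x.1 * x.2.1 * x.2.2 ≠ 0 then x.1 / (3 * x.2.1 * x.2.2)
  else if x.1 = 0 then 0 else 1/2

def y2 (p : ℕ) [Fact p.Prime] (x : ZMod p × ZMod p × ZMod p) : ZMod p :=
  if x.1 * x.2.1 * x.2.2 ≠ 0 then x.2.1 / (3 * x.1 * x.2.2)
  else if x.2.1 = 0 then 0 else 1/2

def y3 (p : ℕ) [Fact p.Prime] (x : ZMod p × ZMod p × ZMod p) : ZMod p :=
  if x.1 * x.2.1 * x.2.2 ≠ 0 then x.2.2 / (3 * x.1 * x.2.1)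
  else if x.2.2 = 0 then 0 else 1/2

lemma aux_a0 (p : ℕ) [Fact p.Prime] (a b c : ZMod p)
    (hm : a^2 + b^2 + c^2 = 3*a*b*c) (hnz : (a, b, c) ≠ ((0:ZMod p), (0:ZMod p), (0:ZMod p)))
    (ha : a = 0) : b * c ≠ 0 := by
  subst ha
  intro hbc
  rcases mul_eq_zero.mp hbc with hb | hc
  · subst hb
    have : c^2 = 0 := by linear_combination hm
    have hc : c = 0 := by exact pow_eq_zero_iff (n := 2) (by norm_num) |>.mp this
    exact hnz (by simp [hc])
  · subst hc
    have : b^2 = 0 := by linear_combination hm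
    have hb : b = 0 := by exact pow_eq_zero_iff (n := 2) (by norm_num) |>.mp this
    exact hnz (by simp [hb])

theorem stmt5 (p : ℕ) [Fact p.Prime] (hp : 3 < p)
    (C : Finset (ZMod p × ZMod p × ZMod p))
    (hM : ∀ x ∈ C, Markoff p x) (hnz : ∀ x ∈ C, x ≠ (0, 0, 0))
    (hclosed : ∀ x ∈ C, vieta1 p x ∈ C) :
    ∑ x ∈ C, y1 p x = (C.card : ZMod p) / 2 := by
  have h2 : (2 : ZMod p) ≠ 0 := by
    have : ¬ ((2 : ℕ) : ZMod p) = 0 := by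
      rw [ZMod.natCast_eq_zero_iff]
      intro h
      have := Nat.le_of_dvd (by norm_num) h
      omega
    exact_mod_cast this
  have h3 : (3 : ZMod p) ≠ 0 := by
    have : ¬ ((3 : ℕ) : ZMod p) = 0 := by
      rw [ZMod.natCast_eq_zero_iff]
      intro h
      have := Nat.le_of_dvd (by norm_num) h
      omega
    exact_mod_cast this
  have hhalf : (1:ZMod p)/2 + 1/2 = 1 := by field_simp; norm_num
  have hpair : ∀ x ∈ C, y1 p x + y1 p (vieta1 p x) = 1 := by
    rintro ⟨a, b, c⟩ hx
    have hm : a^2 + b^2 + c^2 = 3*a*b*c := hM _ hx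
    have hnz' := hnz _ hx
    rw [show vieta1 p (a, b, c) = (3 * b * c - a, b, c) from rfl]
    simp only [y1, vieta1, ne_eq, not_not]
    by_cases hbc : b * c = 0
    · have ha : a ≠ 0 := fun h0 => aux_a0 p a b c hm hnz' h0 hbc
      have e1 : a * b * c = 0 := by rw [mul_assoc, hbc, mul_zero]
      have e2 : (3 * b * c - a) * b * c = 0 := by rw [mul_assoc, hbc, mul_zero]
      have e3 : 3 * b * c - a ≠ 0 := by
        rw [mul_assoc, hbc, mul_zero, zero_sub]
        exact neg_ne_zero.mpr ha
      rw [if_neg (not_not_intro e1), if_neg ha, if_neg (not_not_intro e2), if_neg e3]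
      exact hhalf
    · by_cases ha : a = 0
      · have e1 : a * b * c = 0 := by rw [ha, zero_mul, zero_mul]
        have e2 : 3 * b * c - a ≠ 0 := by
          rw [ha, sub_zero]
          exact mul_ne_zero (mul_ne_zero h3 (fun hb => hbc (by rw [hb, zero_mul])))
            (fun hc => hbc (by rw [hc, mul_zero]))
        have e3 : ¬ (3 * b * c - a) * b * c = 0 := fun h => by
          rcases mul_eq_zero.mp h with h' | h'
          · rcases mul_eq_zero.mp h' with h'' | h''
            · exact e2 h''
            · simp_all
          · simp_all
        rw [if_neg (not_not_intro e1), if_pos ha, if_pos e3]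
        rw [ha, sub_zero] at e2 ⊢
        rw [div_self e2]
        ring
      · have hb : b ≠ 0 := fun h => hbc (by rw [h, zero_mul])
        have hc : c ≠ 0 := fun h => hbc (by rw [h, mul_zero])
        have e1 : ¬ a * b * c = 0 := by
          simp [ha, hb, hc]
        have h3bc : 3 * b * c ≠ 0 := mul_ne_zero (mul_ne_zero h3 hb) hc
        rw [if_pos e1]
        by_cases hd : 3 * b * c - a = 0
        · have e2 : (3 * b * c - a) * b * c = 0 := by rw [hd, zero_mul, zero_mul]
          rw [if_neg (not_not_intro e2), if_pos hd]
          have haeq : a = 3 * b * c := by linear_combination -hd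
          rw [haeq, div_self h3bc]
          ring
        · have e2 : ¬ (3 * b * c - a) * b * c = 0 := by
            simp [hd, hb, hc]
          rw [if_pos e2]
          field_simp
          ring
  have hfix : ∀ x ∈ C, vieta1 p x = x → y1 p x = 1/2 := by
    rintro ⟨a, b, c⟩ hx hfx
    have hm : a^2 + b^2 + c^2 = 3*a*b*c := hM _ hx
    have hnz' := hnz _ hx
    have heq : 3 * b * c - a = a := congrArg Prod.fst hfx
    simp only [y1]
    by_cases e1 : a * b * c = 0
    · rw [if_neg (not_not.mpr e1)]
      have ha : a ≠ 0 := by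
        intro h0
        have hbc : b * c = 0 := by
          rw [h0] at heq
          have h30 : (3:ZMod p) * (b * c) = 0 := by linear_combination heq
          rcases mul_eq_zero.mp h30 with h' | h'
          · exact absurd h' h3
          · exact h'
        exact aux_a0 p a b c hm hnz' h0 hbc
      rw [if_neg ha]
    · rw [if_pos e1]
      have ha : a ≠ 0 := fun h => e1 (by rw [h, zero_mul, zero_mul])
      have h3bc : 3 * b * c = 2 * a := by linear_combination heq
      rw [h3bc]
      field_simp
  have hzero : ∑ x ∈ C, (y1 p x - 1/2) = 0 := by
    apply Finset.sum_involution (fun a _ => vieta1 p a)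
    · intro a ha
      have := hpair a ha
      linear_combination this - hhalf
    · intro a ha hne heq
      exact hne (by rw [hfix a ha heq]; ring)
    · intro a ha; exact hclosed a ha
    · intro a ha
      simp [vieta1]
  have hsplit : ∑ x ∈ C, (y1 p x - 1/2) = (∑ x ∈ C, y1 p x) - C.card * (1/2) := by
    rw [Finset.sum_sub_distrib, Finset.sum_const, nsmul_eq_mul]
  rw [hsplit] at hzero
  have : ∑ x ∈ C, y1 p x = C.card * (1/2) := by linear_combination hzero
  rw [this]
  ring
end

section
/- Let p > 3 be prime and let C be a finite nonempty set of nonzero Markoff triples mod p that is closed under all three Vieta involutions. Then p divides |C|. -/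
section Aux
variable (p : ℕ) [Fact p.Prime]

lemma three_ne (hp : 3 < p) : (3 : ZMod p) ≠ 0 := by
  have : ¬ ((3:ℕ) : ZMod p) = 0 := by
    rw [ZMod.natCast_eq_zero_iff]
    intro h; exact absurd (Nat.le_of_dvd (by norm_num) h) (by omega)
  simpa using this

lemma two_ne (hp : 3 < p) : (2 : ZMod p) ≠ 0 := by
  have : ¬ ((2:ℕ) : ZMod p) = 0 := by
    rw [ZMod.natCast_eq_zero_iff]
    intro h; exact absurd (Nat.le_of_dvd (by norm_num) h) (by omega)
  simpa using this

lemma y1_pos (a b c : ZMod p) (h : a * b * c ≠ 0) : y1 p (a,b,c) = a / (3 * b * c) :=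
  if_pos h

lemma y1_neg (a b c : ZMod p) (h : a * b * c = 0) :
    y1 p (a,b,c) = if a = 0 then 0 else 1/2 :=
  if_neg (not_not.mpr h)

lemma y2_eq_y1 (a b c : ZMod p) : y2 p (a,b,c) = y1 p (b,a,c) := by
  simp only [y1, y2]
  rw [show b*a*c = a*b*c from by ring]

lemma y3_eq_y1 (a b c : ZMod p) : y3 p (a,b,c) = y1 p (c,a,b) := by
  simp only [y1, y3]
  rw [show c*a*b = a*b*c from by ring]

lemma vieta1_invol (x : ZMod p × ZMod p × ZMod p) : vieta1 p (vieta1 p x) = x := by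
  obtain ⟨a,b,c⟩ := x
  show (3*b*c - (3*b*c - a), b, c) = (a, b, c)
  rw [show 3*b*c - (3*b*c - a) = a from by ring]

lemma vieta2_invol (x : ZMod p × ZMod p × ZMod p) : vieta2 p (vieta2 p x) = x := by
  obtain ⟨a,b,c⟩ := x
  show (a, 3*a*c - (3*a*c - b), c) = (a, b, c)
  rw [show 3*a*c - (3*a*c - b) = b from by ring]

lemma vieta3_invol (x : ZMod p × ZMod p × ZMod p) : vieta3 p (vieta3 p x) = x := by
  obtain ⟨a,b,c⟩ := x
  show (a, b, 3*a*b - (3*a*b - c)) = (a, b, c)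
  rw [show 3*a*b - (3*a*b - c) = c from by ring]

lemma key2a (hp : 3 < p) (x : ZMod p × ZMod p × ZMod p) (hM : Markoff p x)
    (hnz : x ≠ (0,0,0)) : y1 p (vieta1 p x) = 1 - y1 p x := by
  obtain ⟨a, b, c⟩ := x
  have h3 := three_ne p hp
  have h2 := two_ne p hp
  simp only [Markoff] at hM
  have hv : vieta1 p (a,b,c) = (3*b*c - a, b, c) := rfl
  rw [hv]
  by_cases ha : a = 0
  · subst ha
    have hb : b ≠ 0 := by
      rintro rfl
      have : c = 0 := pow_eq_zero_iff (n := 2) (by norm_num) |>.mp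
        (by linear_combination hM)
      exact hnz (by simp [this])
    have hc : c ≠ 0 := by
      rintro rfl
      have : b = 0 := pow_eq_zero_iff (n := 2) (by norm_num) |>.mp
        (by linear_combination hM)
      exact hnz (by simp [this])
    have h3bc : 3 * b * c ≠ 0 := mul_ne_zero (mul_ne_zero h3 hb) hc
    have hprod : (3*b*c - 0) * b * c ≠ 0 := by
      rw [sub_zero]
      exact mul_ne_zero (mul_ne_zero h3bc hb) hc
    rw [y1_pos p _ _ _ hprod, y1_neg p 0 b c (by simp), if_pos rfl, sub_zero,
      div_self h3bc, sub_zero]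
  · by_cases hbc : b * c = 0
    · have h0 : (3 : ZMod p) * b * c = 0 := by rw [mul_assoc, hbc, mul_zero]
      have hprod : a * b * c = 0 := by rw [mul_assoc, hbc, mul_zero]
      have hprod' : (3*b*c - a) * b * c = 0 := by rw [mul_assoc, hbc, mul_zero]
      have hna : 3*b*c - a ≠ 0 := by rw [h0, zero_sub]; exact neg_ne_zero.mpr ha
      rw [y1_neg p _ _ _ hprod', y1_neg p _ _ _ hprod, if_neg hna, if_neg ha]
      field_simp
      norm_num
    · have hb : b ≠ 0 := left_ne_zero_of_mul hbc
      have hc : c ≠ 0 := right_ne_zero_of_mul hbc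
      have h3bc : 3 * b * c ≠ 0 := mul_ne_zero (mul_ne_zero h3 hb) hc
      have hprod : a * b * c ≠ 0 := by rw [mul_assoc]; exact mul_ne_zero ha hbc
      rw [y1_pos p _ _ _ hprod]
      by_cases hna : 3*b*c - a = 0
      · rw [y1_neg p _ _ _ (by rw [hna, zero_mul, zero_mul]), if_pos hna]
        have haa : a = 3*b*c := by linear_combination -hna
        rw [haa, div_self h3bc]; ring
      · rw [y1_pos p _ _ _ (by rw [mul_assoc]; exact mul_ne_zero hna hbc)]
        field_simp

lemma markoff_swap (x : ZMod p × ZMod p × ZMod p) (hM : Markoff p x) :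
    Markoff p (x.2.1, x.1, x.2.2) := by
  simp only [Markoff] at *; linear_combination hM

lemma markoff_cyc (x : ZMod p × ZMod p × ZMod p) (hM : Markoff p x) :
    Markoff p (x.2.2, x.1, x.2.1) := by
  simp only [Markoff] at *; linear_combination hM

lemma key2b (hp : 3 < p) (x : ZMod p × ZMod p × ZMod p) (hM : Markoff p x)
    (hnz : x ≠ (0,0,0)) : y2 p (vieta2 p x) = 1 - y2 p x := by
  obtain ⟨a, b, c⟩ := x
  have hv : vieta2 p (a,b,c) = (a, 3*a*c - b, c) := rfl
  rw [hv, y2_eq_y1, y2_eq_y1]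
  have := key2a p hp (b,a,c) (markoff_swap p (a,b,c) hM)
    (by intro h; apply hnz; simp only [Prod.mk.injEq] at h ⊢; tauto)
  simpa [vieta1] using this

lemma key2c (hp : 3 < p) (x : ZMod p × ZMod p × ZMod p) (hM : Markoff p x)
    (hnz : x ≠ (0,0,0)) : y3 p (vieta3 p x) = 1 - y3 p x := by
  obtain ⟨a, b, c⟩ := x
  have hv : vieta3 p (a,b,c) = (a, b, 3*a*b - c) := rfl
  rw [hv, y3_eq_y1, y3_eq_y1]
  have := key2a p hp (c,a,b) (markoff_cyc p (a,b,c) hM)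
    (by intro h; apply hnz; simp only [Prod.mk.injEq] at h ⊢; tauto)
  simpa [vieta1] using this

lemma key1 (hp : 3 < p) (x : ZMod p × ZMod p × ZMod p) (hM : Markoff p x)
    (hnz : x ≠ (0,0,0)) : y1 p x + y2 p x + y3 p x = 1 := by
  obtain ⟨a, b, c⟩ := x
  have h3 := three_ne p hp
  have h2 := two_ne p hp
  simp only [Markoff] at hM
  rw [y2_eq_y1, y3_eq_y1]
  by_cases ha : a = 0
  · subst ha
    have hb : b ≠ 0 := by
      rintro rfl
      have : c = 0 := pow_eq_zero_iff (n := 2) (by norm_num) |>.mp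
        (by linear_combination hM)
      exact hnz (by simp [this])
    have hc : c ≠ 0 := by
      rintro rfl
      have : b = 0 := pow_eq_zero_iff (n := 2) (by norm_num) |>.mp
        (by linear_combination hM)
      exact hnz (by simp [this])
    rw [y1_neg p _ _ _ (by simp), if_pos rfl,
      y1_neg p _ _ _ (by simp), if_neg hb,
      y1_neg p _ _ _ (by simp), if_neg hc]
    field_simp
    norm_num
  · by_cases hb : b = 0
    · subst hb
      have hc : c ≠ 0 := by
        rintro rfl
        have : a = 0 := pow_eq_zero_iff (n := 2) (by norm_num) |>.mp
          (by linear_combination hM)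
        exact hnz (by simp [this])
      rw [y1_neg p _ _ _ (by simp), if_neg ha,
        y1_neg p _ _ _ (by simp), if_pos rfl,
        y1_neg p _ _ _ (by simp), if_neg hc]
      field_simp
      norm_num
    · by_cases hc : c = 0
      · subst hc
        rw [y1_neg p _ _ _ (by simp), if_neg ha,
          y1_neg p _ _ _ (by simp), if_neg hb,
          y1_neg p _ _ _ (by simp), if_pos rfl]
        field_simp
        norm_num
      · have h1 : a * b * c ≠ 0 := mul_ne_zero (mul_ne_zero ha hb) hc
        rw [y1_pos p _ _ _ h1,
          y1_pos p _ _ _ (by rw [show b*a*c = a*b*c from by ring]; exact h1),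
          y1_pos p _ _ _ (by rw [show c*a*b = a*b*c from by ring]; exact h1)]
        have d : (3:ZMod p)*a*b*c ≠ 0 :=
          mul_ne_zero (mul_ne_zero (mul_ne_zero h3 ha) hb) hc
        have z1 : a/(3*b*c) = a^2/(3*a*b*c) := by
          rw [div_eq_div_iff (mul_ne_zero (mul_ne_zero h3 hb) hc) d]; ring
        have z2 : b/(3*a*c) = b^2/(3*a*b*c) := by
          rw [div_eq_div_iff (mul_ne_zero (mul_ne_zero h3 ha) hc) d]; ring
        have z3 : c/(3*a*b) = c^2/(3*a*b*c) := by
          rw [div_eq_div_iff (mul_ne_zero (mul_ne_zero h3 ha) hb) d]; ring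
        rw [z1, z2, z3, ← add_div, ← add_div, hM, div_self d]

end Aux

theorem stmt8 (p : ℕ) [Fact p.Prime] (hp : 3 < p)
    (C : Finset (ZMod p × ZMod p × ZMod p)) (hne : C.Nonempty)
    (hM : ∀ x ∈ C, Markoff p x) (hnz : ∀ x ∈ C, x ≠ (0, 0, 0))
    (h1 : ∀ x ∈ C, vieta1 p x ∈ C) (h2 : ∀ x ∈ C, vieta2 p x ∈ C)
    (h3 : ∀ x ∈ C, vieta3 p x ∈ C) :
    p ∣ C.card := by
  set N : ZMod p := (C.card : ZMod p) with hN
  have e1 : ∑ x ∈ C, y1 p (vieta1 p x) = ∑ x ∈ C, y1 p x :=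
    Finset.sum_nbij' (vieta1 p) (vieta1 p) h1 h1
      (fun a _ => vieta1_invol p a) (fun a _ => vieta1_invol p a) (fun a _ => rfl)
  have e2 : ∑ x ∈ C, y2 p (vieta2 p x) = ∑ x ∈ C, y2 p x :=
    Finset.sum_nbij' (vieta2 p) (vieta2 p) h2 h2
      (fun a _ => vieta2_invol p a) (fun a _ => vieta2_invol p a) (fun a _ => rfl)
  have e3 : ∑ x ∈ C, y3 p (vieta3 p x) = ∑ x ∈ C, y3 p x :=
    Finset.sum_nbij' (vieta3 p) (vieta3 p) h3 h3
      (fun a _ => vieta3_invol p a) (fun a _ => vieta3_invol p a) (fun a _ => rfl)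
  have f1 : ∑ x ∈ C, (1 - y1 p x) = ∑ x ∈ C, y1 p x := by
    rw [← e1]
    exact Finset.sum_congr rfl fun x hx => (key2a p hp x (hM x hx) (hnz x hx)).symm
  have f2 : ∑ x ∈ C, (1 - y2 p x) = ∑ x ∈ C, y2 p x := by
    rw [← e2]
    exact Finset.sum_congr rfl fun x hx => (key2b p hp x (hM x hx) (hnz x hx)).symm
  have f3 : ∑ x ∈ C, (1 - y3 p x) = ∑ x ∈ C, y3 p x := by
    rw [← e3]
    exact Finset.sum_congr rfl fun x hx => (key2c p hp x (hM x hx) (hnz x hx)).symm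
  have hsum : ∑ x ∈ C, (y1 p x + y2 p x + y3 p x) = N := by
    rw [Finset.sum_congr rfl fun x hx => key1 p hp x (hM x hx) (hnz x hx)]
    simp [hN]
  have g1 : N = 2 * ∑ x ∈ C, y1 p x := by
    have := f1
    rw [Finset.sum_sub_distrib, Finset.sum_const, nsmul_eq_mul, mul_one] at this
    linear_combination this
  have g2 : N = 2 * ∑ x ∈ C, y2 p x := by
    have := f2
    rw [Finset.sum_sub_distrib, Finset.sum_const, nsmul_eq_mul, mul_one] at this
    linear_combination this
  have g3 : N = 2 * ∑ x ∈ C, y3 p x := by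
    have := f3
    rw [Finset.sum_sub_distrib, Finset.sum_const, nsmul_eq_mul, mul_one] at this
    linear_combination this
  have hsum' : ∑ x ∈ C, (y1 p x + y2 p x + y3 p x)
      = ∑ x ∈ C, y1 p x + ∑ x ∈ C, y2 p x + ∑ x ∈ C, y3 p x := by
    rw [Finset.sum_add_distrib, Finset.sum_add_distrib]
  have hN0 : N = 0 := by
    rw [hsum'] at hsum
    linear_combination 2*hsum + g1 + g2 + g3
  rw [hN] at hN0
  exact (ZMod.natCast_eq_zero_iff _ _).mp hN0
end

section
/- Let p > 3 be prime. Every connected component of the Markoff mod p graph has a number of vertices divisible by p. -/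
def MarkoffVertex (p : ℕ) : Type :=
  {x : ZMod p × ZMod p × ZMod p // Markoff p x ∧ x ≠ (0, 0, 0)}

def MarkoffGraph (p : ℕ) : SimpleGraph (MarkoffVertex p) where
  Adj a b := a ≠ b ∧
    (b.1 = vieta1 p a.1 ∨ b.1 = vieta2 p a.1 ∨ b.1 = vieta3 p a.1)
  symm := by
    have i1 : ∀ x, vieta1 p (vieta1 p x) = x := by intro x; simp [vieta1]
    have i2 : ∀ x, vieta2 p (vieta2 p x) = x := by intro x; simp [vieta2]
    have i3 : ∀ x, vieta3 p (vieta3 p x) = x := by intro x; simp [vieta3]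
    constructor
    rintro a b ⟨hne, h⟩
    refine ⟨hne.symm, ?_⟩
    rcases h with h | h | h
    · exact Or.inl (by rw [h, i1])
    · exact Or.inr (Or.inl (by rw [h, i2]))
    · exact Or.inr (Or.inr (by rw [h, i3]))
  loopless := by constructor; rintro a ⟨h, -⟩; exact h rfl

section Aux

variable (p : ℕ) [Fact p.Prime]

/-- The common shape of the three `y` functions. -/
noncomputable def Yk (a b c : ZMod p) : ZMod p :=
  if a * b * c ≠ 0 then a / (3 * b * c) else if a = 0 then 0 else 1/2

lemma natCast_ne (n : ℕ) (hn : 0 < n) (hnp : n < p) : (n : ZMod p) ≠ 0 := by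
  intro h
  have := (ZMod.natCast_eq_zero_iff n p).mp h
  have := Nat.le_of_dvd hn this
  omega

lemma half_add_half (hp : 3 < p) : (1/2 : ZMod p) + 1/2 = 1 := by
  have h2 := two_ne p hp
  field_simp
  norm_num

lemma zero_struct (a b c : ZMod p) (hM : a^2 + b^2 + c^2 = 3*a*b*c)
    (hne : ¬(b = 0 ∧ c = 0)) (ha : a = 0) : b ≠ 0 ∧ c ≠ 0 ∧ b^2 + c^2 = 0 := by
  subst ha
  have hbc : b^2 + c^2 = 0 := by linear_combination hM
  have hb : b ≠ 0 := by
    rintro rfl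
    have : c = 0 := by
      have : c^2 = 0 := by linear_combination hbc
      exact pow_eq_zero_iff (n := 2) (by norm_num) |>.mp this
    exact hne ⟨rfl, this⟩
  have hc : c ≠ 0 := by
    rintro rfl
    have : b = 0 := by
      have : b^2 = 0 := by linear_combination hbc
      exact pow_eq_zero_iff (n := 2) (by norm_num) |>.mp this
    exact hne ⟨this, rfl⟩
  exact ⟨hb, hc, hbc⟩

lemma Yk_zero (b c : ZMod p) : Yk p 0 b c = 0 := by
  unfold Yk
  simp

lemma Yk_half (a b c : ZMod p) (ha : a ≠ 0) (hbc : b * c = 0) : Yk p a b c = 1/2 := by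
  unfold Yk
  rw [if_neg (by simp [show a * b * c = 0 by rw [mul_assoc, hbc, mul_zero]]), if_neg ha]

lemma Yk_ne (a b c : ZMod p) (ha : a ≠ 0) (hb : b ≠ 0) (hc : c ≠ 0) :
    Yk p a b c = a / (3 * b * c) := by
  unfold Yk
  rw [if_pos (by simp [ha, hb, hc])]

lemma key_sum (hp : 3 < p) (a b c : ZMod p) (hM : a^2 + b^2 + c^2 = 3*a*b*c)
    (hne : ¬(a = 0 ∧ b = 0 ∧ c = 0)) :
    Yk p a b c + Yk p b a c + Yk p c a b = 1 := by
  have h2 := two_ne p hp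
  have h3 := three_ne p hp
  by_cases ha : a = 0
  · obtain ⟨hb, hc, -⟩ := zero_struct p a b c hM (by tauto) ha
    subst ha
    rw [Yk_zero, Yk_half p b 0 c hb (by ring), Yk_half p c 0 b hc (by ring)]
    simpa using half_add_half p hp
  · by_cases hb : b = 0
    · obtain ⟨ha', hc, -⟩ := zero_struct p b a c (by linear_combination hM) (by tauto) hb
      subst hb
      rw [Yk_zero, Yk_half p a 0 c ha (by ring), Yk_half p c a 0 hc (by ring)]
      simpa using half_add_half p hp
    · by_cases hc : c = 0
      · obtain ⟨ha', hb', -⟩ := zero_struct p c a b (by linear_combination hM) (by tauto) hc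
        subst hc
        rw [Yk_zero, Yk_half p a b 0 ha (by ring), Yk_half p b a 0 hb (by ring)]
        simpa using half_add_half p hp
      · rw [Yk_ne p a b c ha hb hc, Yk_ne p b a c hb ha hc, Yk_ne p c a b hc ha hb]
        have habc : 3 * a * b * c ≠ 0 :=
          mul_ne_zero (mul_ne_zero (mul_ne_zero h3 ha) hb) hc
        have e1 : a / (3*b*c) = a^2 / (3*a*b*c) := by
          rw [show (3*a*b*c : ZMod p) = a * (3*b*c) from by ring, sq,
              mul_div_mul_left _ _ ha]
        have e2 : b / (3*a*c) = b^2 / (3*a*b*c) := by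
          rw [show (3*a*b*c : ZMod p) = b * (3*a*c) from by ring, sq,
              mul_div_mul_left _ _ hb]
        have e3 : c / (3*a*b) = c^2 / (3*a*b*c) := by
          rw [show (3*a*b*c : ZMod p) = c * (3*a*b) from by ring, sq,
              mul_div_mul_left _ _ hc]
        rw [e1, e2, e3, ← add_div, ← add_div, hM, div_self habc]

lemma key_pair (hp : 3 < p) (a b c : ZMod p) (hM : a^2 + b^2 + c^2 = 3*a*b*c)
    (hne : ¬(a = 0 ∧ b = 0 ∧ c = 0)) :
    Yk p (3*b*c - a) b c + Yk p a b c = 1 := by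
  have h2 := two_ne p hp
  have h3 := three_ne p hp
  by_cases hb : b = 0
  · obtain ⟨ha, hc, -⟩ := zero_struct p b a c (by linear_combination hM) (by tauto) hb
    subst hb
    rw [Yk_half p a 0 c ha (by ring),
        Yk_half p (3*0*c - a) 0 c (by simpa using neg_ne_zero.mpr ha) (by ring)]
    exact half_add_half p hp
  · by_cases hc : c = 0
    · obtain ⟨ha, hb', -⟩ := zero_struct p c a b (by linear_combination hM) (by tauto) hc
      subst hc
      rw [Yk_half p a b 0 ha (by ring),
          Yk_half p (3*b*0 - a) b 0 (by simpa using neg_ne_zero.mpr ha) (by ring)]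
      exact half_add_half p hp
    · -- b, c ≠ 0
      by_cases ha : a = 0
      · subst ha
        rw [Yk_zero, Yk_ne p (3*b*c - 0) b c (by simpa using mul_ne_zero (mul_ne_zero h3 hb) hc) hb hc]
        field_simp
        ring
      · by_cases ha' : 3*b*c - a = 0
        · rw [ha', Yk_zero, Yk_ne p a b c ha hb hc]
          have h : a = 3*b*c := by linear_combination -ha'
          rw [zero_add, h, div_self (mul_ne_zero (mul_ne_zero h3 hb) hc)]
        · rw [Yk_ne p (3*b*c - a) b c ha' hb hc, Yk_ne p a b c ha hb hc,
              ← add_div, show 3*b*c - a + a = 3*b*c from by ring,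
              div_self (mul_ne_zero (mul_ne_zero h3 hb) hc)]

end Aux

section Vertex

variable (p : ℕ) [Fact p.Prime]

lemma y1_eq (a b c : ZMod p) : y1 p (a, b, c) = Yk p a b c := rfl

lemma y2_eq (a b c : ZMod p) : y2 p (a, b, c) = Yk p b a c := by
  show (if a*b*c ≠ 0 then b / (3*a*c) else if b = 0 then 0 else 1/2)
      = (if b*a*c ≠ 0 then b / (3*a*c) else if b = 0 then 0 else 1/2)
  rw [show a*b*c = b*a*c from by ring]

lemma y3_eq (a b c : ZMod p) : y3 p (a, b, c) = Yk p c a b := by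
  show (if a*b*c ≠ 0 then c / (3*a*b) else if c = 0 then 0 else 1/2)
      = (if c*a*b ≠ 0 then c / (3*a*b) else if c = 0 then 0 else 1/2)
  rw [show a*b*c = c*a*b from by ring]

lemma markoff_vieta1 (x : ZMod p × ZMod p × ZMod p) (h : Markoff p x) :
    Markoff p (vieta1 p x) := by
  obtain ⟨a, b, c⟩ := x
  simp only [Markoff, vieta1] at h ⊢
  linear_combination h

lemma markoff_vieta2 (x : ZMod p × ZMod p × ZMod p) (h : Markoff p x) :
    Markoff p (vieta2 p x) := by
  obtain ⟨a, b, c⟩ := x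
  simp only [Markoff, vieta2] at h ⊢
  linear_combination h

lemma markoff_vieta3 (x : ZMod p × ZMod p × ZMod p) (h : Markoff p x) :
    Markoff p (vieta3 p x) := by
  obtain ⟨a, b, c⟩ := x
  simp only [Markoff, vieta3] at h ⊢
  linear_combination h

lemma vieta1_ne (x : ZMod p × ZMod p × ZMod p) (h : x ≠ (0, 0, 0)) :
    vieta1 p x ≠ (0, 0, 0) := by
  obtain ⟨a, b, c⟩ := x
  simp only [vieta1, ne_eq, Prod.mk.injEq, not_and] at h ⊢
  intro h1 h2 h3
  exact h (by linear_combination -h1 + 3*c*h2) h2 h3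

lemma vieta2_ne (x : ZMod p × ZMod p × ZMod p) (h : x ≠ (0, 0, 0)) :
    vieta2 p x ≠ (0, 0, 0) := by
  obtain ⟨a, b, c⟩ := x
  simp only [vieta2, ne_eq, Prod.mk.injEq, not_and] at h ⊢
  intro h1 h2 h3
  exact h h1 (by linear_combination -h2 + 3*c*h1) h3

lemma vieta3_ne (x : ZMod p × ZMod p × ZMod p) (h : x ≠ (0, 0, 0)) :
    vieta3 p x ≠ (0, 0, 0) := by
  obtain ⟨a, b, c⟩ := x
  simp only [vieta3, ne_eq, Prod.mk.injEq, not_and] at h ⊢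
  intro h1 h2 h3
  exact h h1 h2 (by linear_combination -h3 + 3*b*h1)

def iota1 (v : MarkoffVertex p) : MarkoffVertex p :=
  ⟨vieta1 p v.1, markoff_vieta1 p v.1 v.2.1, vieta1_ne p v.1 v.2.2⟩

def iota2 (v : MarkoffVertex p) : MarkoffVertex p :=
  ⟨vieta2 p v.1, markoff_vieta2 p v.1 v.2.1, vieta2_ne p v.1 v.2.2⟩

def iota3 (v : MarkoffVertex p) : MarkoffVertex p :=
  ⟨vieta3 p v.1, markoff_vieta3 p v.1 v.2.1, vieta3_ne p v.1 v.2.2⟩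

lemma iota1_invol (v : MarkoffVertex p) : iota1 p (iota1 p v) = v :=
  Subtype.ext (vieta1_invol p v.1)

lemma iota2_invol (v : MarkoffVertex p) : iota2 p (iota2 p v) = v :=
  Subtype.ext (vieta2_invol p v.1)

lemma iota3_invol (v : MarkoffVertex p) : iota3 p (iota3 p v) = v :=
  Subtype.ext (vieta3_invol p v.1)

lemma pair1 (hp : 3 < p) (v : MarkoffVertex p) :
    y1 p (iota1 p v).1 + y1 p v.1 = 1 := by
  obtain ⟨⟨a, b, c⟩, hM, hne⟩ := v
  have hM' : a^2 + b^2 + c^2 = 3*a*b*c := hM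
  have hne' : ¬(a = 0 ∧ b = 0 ∧ c = 0) := by
    rintro ⟨rfl, rfl, rfl⟩; exact hne rfl
  show y1 p (3*b*c - a, b, c) + y1 p (a, b, c) = 1
  rw [y1_eq, y1_eq]
  exact key_pair p hp a b c hM' hne'

lemma pair2 (hp : 3 < p) (v : MarkoffVertex p) :
    y2 p (iota2 p v).1 + y2 p v.1 = 1 := by
  obtain ⟨⟨a, b, c⟩, hM, hne⟩ := v
  have hM' : a^2 + b^2 + c^2 = 3*a*b*c := hM
  have hne' : ¬(b = 0 ∧ a = 0 ∧ c = 0) := by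
    rintro ⟨rfl, rfl, rfl⟩; exact hne rfl
  show y2 p (a, 3*a*c - b, c) + y2 p (a, b, c) = 1
  rw [y2_eq, y2_eq]
  exact key_pair p hp b a c (by linear_combination hM') hne'

lemma pair3 (hp : 3 < p) (v : MarkoffVertex p) :
    y3 p (iota3 p v).1 + y3 p v.1 = 1 := by
  obtain ⟨⟨a, b, c⟩, hM, hne⟩ := v
  have hM' : a^2 + b^2 + c^2 = 3*a*b*c := hM
  have hne' : ¬(c = 0 ∧ a = 0 ∧ b = 0) := by
    rintro ⟨rfl, rfl, rfl⟩; exact hne rfl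
  show y3 p (a, b, 3*a*b - c) + y3 p (a, b, c) = 1
  rw [y3_eq, y3_eq]
  exact key_pair p hp c a b (by linear_combination hM') hne'

lemma vertex_sum (hp : 3 < p) (v : MarkoffVertex p) :
    y1 p v.1 + y2 p v.1 + y3 p v.1 = 1 := by
  obtain ⟨⟨a, b, c⟩, hM, hne⟩ := v
  have hM' : a^2 + b^2 + c^2 = 3*a*b*c := hM
  have hne' : ¬(a = 0 ∧ b = 0 ∧ c = 0) := by
    rintro ⟨rfl, rfl, rfl⟩; exact hne rfl
  show y1 p (a, b, c) + y2 p (a, b, c) + y3 p (a, b, c) = 1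
  rw [y1_eq, y2_eq, y3_eq]
  exact key_sum p hp a b c hM' hne'

end Vertex

section Graph

variable (p : ℕ) [Fact p.Prime]

lemma cc_iota1 (v : MarkoffVertex p) :
    (MarkoffGraph p).connectedComponentMk (iota1 p v)
      = (MarkoffGraph p).connectedComponentMk v := by
  by_cases h : iota1 p v = v
  · rw [h]
  · exact SimpleGraph.ConnectedComponent.connectedComponentMk_eq_of_adj
      ⟨h, Or.inl (vieta1_invol p v.1).symm⟩

lemma cc_iota2 (v : MarkoffVertex p) :
    (MarkoffGraph p).connectedComponentMk (iota2 p v)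
      = (MarkoffGraph p).connectedComponentMk v := by
  by_cases h : iota2 p v = v
  · rw [h]
  · exact SimpleGraph.ConnectedComponent.connectedComponentMk_eq_of_adj
      ⟨h, Or.inr (Or.inl (vieta2_invol p v.1).symm)⟩

lemma cc_iota3 (v : MarkoffVertex p) :
    (MarkoffGraph p).connectedComponentMk (iota3 p v)
      = (MarkoffGraph p).connectedComponentMk v := by
  by_cases h : iota3 p v = v
  · rw [h]
  · exact SimpleGraph.ConnectedComponent.connectedComponentMk_eq_of_adj
      ⟨h, Or.inr (Or.inr (vieta3_invol p v.1).symm)⟩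

variable (c : (MarkoffGraph p).ConnectedComponent)

def jmap1 (w : {v : MarkoffVertex p // (MarkoffGraph p).connectedComponentMk v = c}) :
    {v : MarkoffVertex p // (MarkoffGraph p).connectedComponentMk v = c} :=
  ⟨iota1 p w.1, (cc_iota1 p w.1).trans w.2⟩

def jmap2 (w : {v : MarkoffVertex p // (MarkoffGraph p).connectedComponentMk v = c}) :
    {v : MarkoffVertex p // (MarkoffGraph p).connectedComponentMk v = c} :=
  ⟨iota2 p w.1, (cc_iota2 p w.1).trans w.2⟩

def jmap3 (w : {v : MarkoffVertex p // (MarkoffGraph p).connectedComponentMk v = c}) :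
    {v : MarkoffVertex p // (MarkoffGraph p).connectedComponentMk v = c} :=
  ⟨iota3 p w.1, (cc_iota3 p w.1).trans w.2⟩

lemma jmap1_invol (w) : jmap1 p c (jmap1 p c w) = w :=
  Subtype.ext (iota1_invol p w.1)

lemma jmap2_invol (w) : jmap2 p c (jmap2 p c w) = w :=
  Subtype.ext (iota2_invol p w.1)

lemma jmap3_invol (w) : jmap3 p c (jmap3 p c w) = w :=
  Subtype.ext (iota3_invol p w.1)

end Graph

theorem stmt9 (p : ℕ) [Fact p.Prime] (hp : 3 < p)
    (c : (MarkoffGraph p).ConnectedComponent) :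
    p ∣ Nat.card {v : MarkoffVertex p // (MarkoffGraph p).connectedComponentMk v = c} := by
  classical
  have h2 : (2 : ZMod p) ≠ 0 := two_ne p hp
  haveI : NeZero p := ⟨(Fact.out : p.Prime).ne_zero⟩
  haveI : Fintype (MarkoffVertex p) := by unfold MarkoffVertex; infer_instance
  haveI : Fintype {v : MarkoffVertex p // (MarkoffGraph p).connectedComponentMk v = c} :=
    Subtype.fintype _
  rw [Nat.card_eq_fintype_card, ← ZMod.natCast_eq_zero_iff]
  set n : ZMod p :=
    (Fintype.card {v : MarkoffVertex p // (MarkoffGraph p).connectedComponentMk v = c} : ZMod p)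
    with hn
  -- three involution sums
  have sum1 : ∑ w : {v : MarkoffVertex p // (MarkoffGraph p).connectedComponentMk v = c},
      (y1 p w.1.1 - 1/2) = 0 := by
    refine Finset.sum_involution (fun w _ => jmap1 p c w) ?_ ?_ (fun w _ => Finset.mem_univ _)
      (fun w _ => jmap1_invol p c w)
    · intro w _
      show y1 p w.1.1 - 1/2 + (y1 p (iota1 p w.1).1 - 1/2) = 0
      linear_combination (pair1 p hp w.1) - (half_add_half p hp)
    · intro w _ hf heq
      apply hf
      have hp1 := pair1 p hp w.1
      have hw : (iota1 p w.1) = w.1 := congrArg Subtype.val heq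
      rw [hw] at hp1
      have : y1 p w.1.1 = 1/2 := by
        rw [eq_div_iff h2]; linear_combination hp1
      rw [this, sub_self]
  have sum2 : ∑ w : {v : MarkoffVertex p // (MarkoffGraph p).connectedComponentMk v = c},
      (y2 p w.1.1 - 1/2) = 0 := by
    refine Finset.sum_involution (fun w _ => jmap2 p c w) ?_ ?_ (fun w _ => Finset.mem_univ _)
      (fun w _ => jmap2_invol p c w)
    · intro w _
      show y2 p w.1.1 - 1/2 + (y2 p (iota2 p w.1).1 - 1/2) = 0
      linear_combination (pair2 p hp w.1) - (half_add_half p hp)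
    · intro w _ hf heq
      apply hf
      have hp1 := pair2 p hp w.1
      have hw : (iota2 p w.1) = w.1 := congrArg Subtype.val heq
      rw [hw] at hp1
      have : y2 p w.1.1 = 1/2 := by
        rw [eq_div_iff h2]; linear_combination hp1
      rw [this, sub_self]
  have sum3 : ∑ w : {v : MarkoffVertex p // (MarkoffGraph p).connectedComponentMk v = c},
      (y3 p w.1.1 - 1/2) = 0 := by
    refine Finset.sum_involution (fun w _ => jmap3 p c w) ?_ ?_ (fun w _ => Finset.mem_univ _)
      (fun w _ => jmap3_invol p c w)
    · intro w _
      show y3 p w.1.1 - 1/2 + (y3 p (iota3 p w.1).1 - 1/2) = 0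
      linear_combination (pair3 p hp w.1) - (half_add_half p hp)
    · intro w _ hf heq
      apply hf
      have hp1 := pair3 p hp w.1
      have hw : (iota3 p w.1) = w.1 := congrArg Subtype.val heq
      rw [hw] at hp1
      have : y3 p w.1.1 = 1/2 := by
        rw [eq_div_iff h2]; linear_combination hp1
      rw [this, sub_self]
  -- total sum
  have etot : ∑ w : {v : MarkoffVertex p // (MarkoffGraph p).connectedComponentMk v = c},
      (y1 p w.1.1 + y2 p w.1.1 + y3 p w.1.1) = n := by
    rw [Finset.sum_congr rfl (fun w _ => vertex_sum p hp w.1), Finset.sum_const,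
      Finset.card_univ, nsmul_eq_mul, mul_one, hn]
  have hconst : ∑ _w : {v : MarkoffVertex p // (MarkoffGraph p).connectedComponentMk v = c},
      (1/2 : ZMod p) = n * (1/2) := by
    rw [Finset.sum_const, Finset.card_univ, nsmul_eq_mul, hn]
  have e1 : ∑ w : {v : MarkoffVertex p // (MarkoffGraph p).connectedComponentMk v = c},
      y1 p w.1.1 = n * (1/2) := by
    have := sum1
    rw [Finset.sum_sub_distrib, hconst, sub_eq_zero] at this
    exact this
  have e2 : ∑ w : {v : MarkoffVertex p // (MarkoffGraph p).connectedComponentMk v = c},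
      y2 p w.1.1 = n * (1/2) := by
    have := sum2
    rw [Finset.sum_sub_distrib, hconst, sub_eq_zero] at this
    exact this
  have e3 : ∑ w : {v : MarkoffVertex p // (MarkoffGraph p).connectedComponentMk v = c},
      y3 p w.1.1 = n * (1/2) := by
    have := sum3
    rw [Finset.sum_sub_distrib, hconst, sub_eq_zero] at this
    exact this
  rw [Finset.sum_add_distrib, Finset.sum_add_distrib, e1, e2, e3] at etot
  -- etot : n * (1/2) + n * (1/2) + n * (1/2) = n
  have hm : n * (1/2) * 2 = n := by
    rw [mul_assoc, one_div, inv_mul_cancel₀ h2, mul_one]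
  linear_combination 2 * etot - 3 * hm
end

section
/- Let p > 3 be prime. The total number of nonzero solutions in F_p^3 to x1^2 + x2^2 + x3^2 = 3*x1*x2*x3 is divisible by p. -/
open Finset

private lemma sum_pow_top {p : ℕ} [Fact p.Prime] (hp : 3 < p) :
    ∑ y : ZMod p, y ^ (p - 1) = -1 := by
  rw [← Finset.sum_erase_add _ _ (Finset.mem_univ (0 : ZMod p)),
    zero_pow (by omega : p - 1 ≠ 0), add_zero,
    Finset.sum_congr rfl (fun y hy => ZMod.pow_card_sub_one_eq_one (Finset.ne_of_mem_erase hy)),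
    Finset.sum_const, Finset.card_erase_of_mem (mem_univ _), Finset.card_univ, ZMod.card,
    nsmul_eq_mul, mul_one, Nat.cast_sub (by omega : 1 ≤ p), ZMod.natCast_self, Nat.cast_one,
    zero_sub]

private lemma markoffInnerSum {p : ℕ} [Fact p.Prime] (hp : 3 < p) (A B : ZMod p) :
    ∑ y : ZMod p, (A * y ^ 2 + B) ^ (p / 2) = -A ^ (p / 2) := by
  have hodd : p % 2 = 1 := Nat.odd_iff.mp ((Fact.out : p.Prime).odd_of_ne_two (by omega))
  have h2m : 2 * (p / 2) = p - 1 := by omega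
  calc ∑ y : ZMod p, (A * y ^ 2 + B) ^ (p / 2)
      = ∑ y : ZMod p, ∑ k ∈ range (p / 2 + 1),
          y ^ (2 * k) * (A ^ k * B ^ (p / 2 - k) * ((p / 2).choose k : ZMod p)) := by
        refine sum_congr rfl fun y _ => ?_
        rw [add_pow]
        refine sum_congr rfl fun k _ => ?_
        rw [mul_pow, ← pow_mul]
        ring
    _ = ∑ k ∈ range (p / 2 + 1),
          (∑ y : ZMod p, y ^ (2 * k)) * (A ^ k * B ^ (p / 2 - k) * ((p / 2).choose k : ZMod p)) := by
        rw [sum_comm]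
        exact sum_congr rfl fun k _ => by rw [sum_mul]
    _ = (∑ y : ZMod p, y ^ (2 * (p / 2)))
          * (A ^ (p / 2) * B ^ (p / 2 - p / 2) * ((p / 2).choose (p / 2) : ZMod p)) := by
        refine Finset.sum_eq_single (p / 2) (fun k hk hne => ?_) (fun h => absurd (self_mem_range_succ _) h)
        have hk' : k < p / 2 := by
          rcases Finset.mem_range.mp hk with h; omega
        have hz : ∑ y : ZMod p, y ^ (2 * k) = 0 :=
          FiniteField.sum_pow_lt_card_sub_one (ZMod p) (2 * k) (by rw [ZMod.card]; omega)
        rw [hz, zero_mul]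
    _ = -A ^ (p / 2) := by
        rw [h2m, sum_pow_top hp, Nat.sub_self, pow_zero, Nat.choose_self, Nat.cast_one]
        ring

private lemma sqrts_card {p : ℕ} [Fact p.Prime] (hp : 3 < p) (a : ZMod p) :
    (((univ.filter fun w : ZMod p => w ^ 2 = a).card : ℕ) : ZMod p) = 1 + a ^ (p / 2) := by
  have hchar : ringChar (ZMod p) ≠ 2 := by
    rw [ZMod.ringChar_zmod_n]; omega
  have h := quadraticChar_card_sqrts hchar a
  have hset : {x : ZMod p | x ^ 2 = a}.toFinset = univ.filter (fun w => w ^ 2 = a) := by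
    ext x; simp
  rw [hset] at h
  have hpow := quadraticChar_eq_pow_of_char_ne_two' hchar a
  rw [ZMod.card] at hpow
  have : (((univ.filter fun w : ZMod p => w ^ 2 = a).card : ℤ) : ZMod p)
      = ((quadraticChar (ZMod p) a + 1 : ℤ) : ZMod p) := by rw [h]
  push_cast at this
  rw [this, hpow]
  ring

private lemma fiber_card {p : ℕ} [Fact p.Prime] (hp : 3 < p) (x y : ZMod p) :
    (univ.filter fun z : ZMod p => x ^ 2 + y ^ 2 + z ^ 2 = 3 * x * y * z).card
      = (univ.filter fun w : ZMod p => w ^ 2 = 9 * x ^ 2 * y ^ 2 - 4 * x ^ 2 - 4 * y ^ 2).card := by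
  have h2 : (2 : ZMod p) ≠ 0 := by
    have : ((2 : ℕ) : ZMod p) ≠ 0 := by
      rw [Ne, ZMod.natCast_eq_zero_iff]
      intro h; have := Nat.le_of_dvd (by norm_num) h; omega
    simpa using this
  have h4 : (4 : ZMod p) ≠ 0 := by
    have : (4 : ZMod p) = 2 * 2 := by norm_num
    rw [this]; exact mul_ne_zero h2 h2
  refine Finset.card_bij' (fun z _ => 2 * z - 3 * x * y) (fun w _ => (w + 3 * x * y) * (2 : ZMod p)⁻¹)
    ?_ ?_ ?_ ?_
  · intro z hz
    simp only [mem_filter, mem_univ, true_and] at hz ⊢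
    linear_combination (4 : ZMod p) * hz
  · intro w hw
    simp only [mem_filter, mem_univ, true_and] at hw ⊢
    have hz : 2 * ((w + 3 * x * y) * (2 : ZMod p)⁻¹) = w + 3 * x * y := by
      field_simp
    set z := (w + 3 * x * y) * (2 : ZMod p)⁻¹ with hzdef
    have key : 4 * (x ^ 2 + y ^ 2 + z ^ 2) = 4 * (3 * x * y * z) := by
      linear_combination hw + (2 * z - 3 * x * y + w) * hz
    exact mul_left_cancel₀ h4 key
  · intro z _
    field_simp
    ring
  · intro w _
    field_simp
    ring

theorem stmt12 (p : ℕ) [Fact p.Prime] (hp : 3 < p) :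
    p ∣ (Finset.univ.filter (fun x : ZMod p × ZMod p × ZMod p =>
      x ≠ (0, 0, 0) ∧
      x.1^2 + x.2.1^2 + x.2.2^2 = 3 * x.1 * x.2.1 * x.2.2)).card := by
  classical
  set T := (Finset.univ.filter (fun x : ZMod p × ZMod p × ZMod p =>
      x.1^2 + x.2.1^2 + x.2.2^2 = 3 * x.1 * x.2.1 * x.2.2)) with hT
  have horig : ((0, 0, 0) : ZMod p × ZMod p × ZMod p) ∈ T := by simp [hT]
  have hsub : (Finset.univ.filter (fun x : ZMod p × ZMod p × ZMod p =>
      x ≠ (0, 0, 0) ∧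
      x.1^2 + x.2.1^2 + x.2.2^2 = 3 * x.1 * x.2.1 * x.2.2)) = T.erase (0, 0, 0) := by
    ext a
    simp only [hT, Finset.mem_filter, Finset.mem_erase, Finset.mem_univ, true_and]
  rw [hsub, Finset.card_erase_of_mem horig]
  have h3 : (3 : ZMod p) ≠ 0 := by
    have : ((3 : ℕ) : ZMod p) ≠ 0 := by
      rw [Ne, ZMod.natCast_eq_zero_iff]
      intro h; have := Nat.le_of_dvd (by norm_num) h; omega
    simpa using this
  have hodd : p % 2 = 1 := Nat.odd_iff.mp ((Fact.out : p.Prime).odd_of_ne_two (by omega))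
  have h2m : 2 * (p / 2) = p - 1 := by omega
  have step1 : T.card = ∑ x : ZMod p, ∑ y : ZMod p,
      (univ.filter fun z : ZMod p => x ^ 2 + y ^ 2 + z ^ 2 = 3 * x * y * z).card := by
    rw [hT, Finset.card_filter, Fintype.sum_prod_type]
    refine sum_congr rfl fun x _ => ?_
    rw [Fintype.sum_prod_type]
    exact sum_congr rfl fun y _ => (Finset.card_filter _ _).symm
  have hcast : (T.card : ZMod p) = 1 := by
    have : (T.card : ZMod p) = ∑ x : ZMod p, ∑ y : ZMod p,
        (1 + (9 * x ^ 2 * y ^ 2 - 4 * x ^ 2 - 4 * y ^ 2) ^ (p / 2)) := by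
      rw [step1]
      push_cast
      refine sum_congr rfl fun x _ => sum_congr rfl fun y _ => ?_
      rw [fiber_card hp, sqrts_card hp]
    rw [this]
    have hx : ∀ x : ZMod p, ∑ y : ZMod p,
        (1 + (9 * x ^ 2 * y ^ 2 - 4 * x ^ 2 - 4 * y ^ 2) ^ (p / 2))
        = -((9 * x ^ 2 + (-4)) ^ (p / 2)) := by
      intro x
      rw [Finset.sum_add_distrib]
      have e1 : ∑ _y : ZMod p, (1 : ZMod p) = 0 := by
        simp [Finset.card_univ, ZMod.card, ZMod.natCast_self]
      have e2 : ∑ y : ZMod p, (9 * x ^ 2 * y ^ 2 - 4 * x ^ 2 - 4 * y ^ 2) ^ (p / 2)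
          = -((9 * x ^ 2 + (-4)) ^ (p / 2)) := by
        calc ∑ y : ZMod p, (9 * x ^ 2 * y ^ 2 - 4 * x ^ 2 - 4 * y ^ 2) ^ (p / 2)
            = ∑ y : ZMod p, ((9 * x ^ 2 - 4) * y ^ 2 + (-(4 * x ^ 2))) ^ (p / 2) := by
              refine sum_congr rfl fun y _ => ?_; ring_nf
          _ = -(9 * x ^ 2 - 4) ^ (p / 2) := markoffInnerSum hp _ _
          _ = -((9 * x ^ 2 + (-4)) ^ (p / 2)) := by ring_nf
      rw [e1, e2, zero_add]
    rw [Finset.sum_congr rfl (fun x _ => hx x)]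
    have : ∑ x : ZMod p, -((9 * x ^ 2 + (-4)) ^ (p / 2))
        = -(∑ x : ZMod p, (9 * x ^ 2 + (-4)) ^ (p / 2)) := by
      rw [Finset.sum_neg_distrib]
    rw [this, markoffInnerSum hp 9 (-4), neg_neg]
    have h9 : (9 : ZMod p) = 3 ^ 2 := by norm_num
    rw [h9, ← pow_mul, h2m, ZMod.pow_card_sub_one_eq_one h3]
  have h1 : 1 ≤ T.card := Finset.card_pos.mpr ⟨_, horig⟩
  have hz : ((T.card - 1 : ℕ) : ZMod p) = 0 := by
    rw [Nat.cast_sub h1, hcast, Nat.cast_one, sub_self]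
  exact (ZMod.natCast_eq_zero_iff _ p).mp hz
end
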